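/- arXiv:math/0503114 — 4 statements merged into one kernel-verified Lean document; each statement's English description precedes it below -/
import Mathlib

section
/- For nonnegative integers k, m, r with 2k \le m, the coefficient of q^r in h_{m-2k}(\{1,q\}^{k+1})(1-q)^{2k+1} equals (-1)^{r+m} \binom{m+1}{r} \binom{r-k-1}{m-2k}, i.e. \sum_{i=0}^{m-2k} (-1)^{r-i} \binom{k+i}{k}\binom{m-k-i}{k}\binom{2k+1}{r-i} = (-1)^{r+m}\binom{m+1}{r}\binom{r-k-1}{m-2k}. -/
open Finset

/-- Generalized binomial coefficient for integer arguments: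
`ichoose a b = a (a-1) ⋯ (a-b+1) / b!` for `b ≥ 0`, and `0` for `b < 0`. -/
def ichoose (a b : ℤ) : ℤ :=
  if b < 0 then 0
  else if 0 ≤ a then (a.toNat.choose b.toNat : ℤ)
  else (-1) ^ b.toNat * ((b - 1 - a).toNat.choose b.toNat : ℤ)

section Aux

lemma ichoose_of_neg {a b : ℤ} (h : b < 0) : ichoose a b = 0 := by simp [ichoose, h]

lemma ichoose_zero_right (a : ℤ) : ichoose a 0 = 1 := by
  unfold ichoose; split_ifs <;> simp_all

lemma ichoose_natCast (N : ℕ) (r : ℕ) : ichoose (N : ℤ) (r : ℕ) = (N.choose r : ℤ) := by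
  unfold ichoose
  split_ifs with h1 h2
  · omega
  · simp
  · omega

lemma ichoose_one_right (a : ℤ) : ichoose a 1 = a := by
  unfold ichoose
  split_ifs with h1 h2
  · omega
  · simp [Nat.choose_one_right]; omega
  · simp [Nat.choose_one_right]; omega

lemma ichoose_pascal (a b : ℤ) : ichoose a b = ichoose (a-1) b + ichoose (a-1) (b-1) := by
  rcases lt_or_ge b 0 with hb | hb
  · rw [ichoose_of_neg hb, ichoose_of_neg hb, ichoose_of_neg (by omega), add_zero]
  rcases eq_or_lt_of_le hb with hb0 | hb1
  · rw [← hb0]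
    rw [ichoose_of_neg (by omega : (0:ℤ)-1 < 0)]
    unfold ichoose
    split_ifs <;> simp
  · -- b ≥ 1
    rcases lt_or_ge a 0 with ha | ha
    · -- a ≤ -1 : all negative branch
      unfold ichoose
      rw [if_neg (by omega), if_neg (by omega), if_neg (by omega), if_neg (by omega),
        if_neg (by omega), if_neg (by omega)]
      have h1 : (b - 1 - (a-1)).toNat = (b - 1 - a).toNat + 1 := by omega
      have h2 : ((b-1) - 1 - (a-1)).toNat = (b - 1 - a).toNat := by omega
      have h3 : b.toNat = (b-1).toNat + 1 := by omega
      rw [h1, h2, h3]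
      rw [Nat.choose_succ_succ]
      push_cast
      ring
    · rcases eq_or_lt_of_le ha with ha0 | ha1
      · -- a = 0
        rw [← ha0]
        unfold ichoose
        rw [if_neg (by omega), if_pos le_rfl, if_neg (by omega), if_neg (by omega),
          if_neg (by omega), if_neg (by omega)]
        have h0 : (0:ℤ).toNat = 0 := rfl
        have : (0:ℕ).choose b.toNat = 0 := Nat.choose_eq_zero_of_lt (by omega)
        rw [h0, this]
        have h1 : (b - 1 - ((0:ℤ)-1)).toNat = b.toNat := by omega
        have h2 : ((b-1) - 1 - ((0:ℤ)-1)).toNat = (b-1).toNat := by omega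
        have h3 : b.toNat = (b-1).toNat + 1 := by omega
        rw [h1, h2, Nat.choose_self, Nat.choose_self, h3]
        push_cast
        ring
      · -- a ≥ 1
        unfold ichoose
        rw [if_neg (by omega), if_pos (by omega), if_neg (by omega), if_pos (by omega),
          if_neg (by omega), if_pos (by omega)]
        have h1 : a.toNat = (a-1).toNat + 1 := by omega
        have h3 : b.toNat = (b-1).toNat + 1 := by omega
        rw [h1, h3, Nat.choose_succ_succ]
        push_cast
        ring

lemma ichoose_absorb (a b : ℤ) : b * ichoose a b = a * ichoose (a-1) (b-1) := by
  rcases lt_or_ge b 0 with hb | hb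
  · rw [ichoose_of_neg hb, ichoose_of_neg (by omega)]; ring
  rcases eq_or_lt_of_le hb with hb0 | hb1
  · rw [← hb0, ichoose_of_neg (by omega : (0:ℤ)-1 < 0)]; ring
  rcases lt_or_ge a 0 with ha | ha
  · -- a ≤ -1
    unfold ichoose
    rw [if_neg (by omega), if_neg (by omega), if_neg (by omega), if_neg (by omega)]
    have h2 : ((b-1) - 1 - (a-1)).toNat = (b - 1 - a).toNat := by omega
    have h3 : b.toNat = (b-1).toNat + 1 := by omega
    rw [h2, h3]
    have key := Nat.choose_succ_right_eq (b - 1 - a).toNat (b-1).toNat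
    -- choose n (k+1) * (k+1) = choose n k * (n - k)
    have hsub : ((b - 1 - a).toNat - (b-1).toNat : ℕ) = (-a).toNat := by omega
    rw [hsub] at key
    have keyz : ((b - 1 - a).toNat.choose ((b-1).toNat + 1) : ℤ) * (((b-1).toNat : ℤ) + 1)
        = ((b - 1 - a).toNat.choose (b-1).toNat : ℤ) * ((-a).toNat : ℤ) := by
      exact_mod_cast congrArg (Nat.cast : ℕ → ℤ) key
    have e1 : (((b-1).toNat : ℤ) + 1) = b := by omega
    have e2 : (((-a).toNat : ℤ)) = -a := by omega
    rw [e1, e2] at keyz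
    linear_combination (-(-1:ℤ)^((b-1).toNat)) * keyz
  · rcases eq_or_lt_of_le ha with ha0 | ha1
    · rw [← ha0]
      unfold ichoose
      rw [if_neg (by omega), if_pos le_rfl, if_neg (by omega), if_neg (by omega)]
      have h0 : (0:ℤ).toNat = 0 := rfl
      rw [h0, Nat.choose_eq_zero_of_lt (by omega : 0 < b.toNat)]
      ring
    · -- a ≥ 1
      unfold ichoose
      rw [if_neg (by omega), if_pos (by omega), if_neg (by omega), if_pos (by omega)]
      have h1 : a.toNat = (a-1).toNat + 1 := by omega
      have h3 : b.toNat = (b-1).toNat + 1 := by omega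
      rw [h1, h3]
      have key := Nat.add_one_mul_choose_eq (a-1).toNat (b-1).toNat
      -- succ n * choose n k = choose (succ n) (succ k) * succ k
      have keyz : (((a-1).toNat : ℤ) + 1) * ((a-1).toNat.choose (b-1).toNat : ℤ)
          = ((((a-1).toNat+1).choose ((b-1).toNat+1) : ℕ) : ℤ) * (((b-1).toNat : ℤ) + 1) := by
        exact_mod_cast congrArg (Nat.cast : ℕ → ℤ) key
      have e1 : (((a-1).toNat : ℤ) + 1) = a := by omega
      have e2 : (((b-1).toNat : ℤ) + 1) = b := by omega
      rw [e1, e2] at keyz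
      linear_combination -keyz

lemma ichoose_absorb' (a b : ℤ) : b * ichoose a b = (a - b + 1) * ichoose a (b-1) := by
  have h1 := ichoose_absorb a b
  have h2 := ichoose_pascal a (b-1)
  have h3 := ichoose_absorb a (b-1)
  linear_combination h1 - a * h2 + h3

lemma ichoose_neg_int (k : ℤ) (n : ℕ) (hk : 0 ≤ k) :
    ichoose (-k-1) (n : ℤ) = (-1)^n * ((n + k.toNat).choose n : ℤ) := by
  unfold ichoose
  rw [if_neg (by omega), if_neg (by omega)]
  have h1 : ((n:ℤ) - 1 - (-k-1)).toNat = n + k.toNat := by omega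
  have h2 : ((n:ℤ)).toNat = n := by omega
  rw [h1, h2]

-- (j+1) * C(k+j+1, k) = (k+j+1) * C(k+j, k)
lemma natAbs1 (k j : ℕ) : ((j:ℤ)+1) * ((k+j+1).choose k : ℤ) = ((k:ℤ)+j+1) * ((k+j).choose k : ℤ) := by
  have h1 : (k+j+1).choose k = (k+j+1).choose (j+1) := by
    rw [← Nat.choose_symm (by omega : j+1 ≤ k+j+1)]
    congr 1
    omega
  have h2 : (k+j).choose k = (k+j).choose j := by
    rw [← Nat.choose_symm (by omega : j ≤ k+j)]
    congr 1
    omega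
  have key := Nat.add_one_mul_choose_eq (k+j) j
  rw [h1, h2]
  have : ((k+j+1) * ((k+j).choose j) : ℕ) = ((k+j+1).choose (j+1)) * (j+1) := by
    simpa [Nat.succ_eq_add_one] using key
  have := congrArg (Nat.cast : ℕ → ℤ) this
  push_cast at this ⊢
  linear_combination -this

-- main per-index binomial identity
lemma MI (k p d : ℕ) :
    ((p:ℤ)+d+2) * ((k+p+1).choose k : ℤ) * ((k+d+1).choose k : ℤ)
      + ((p:ℤ)+d+2*k+2) * ((k+p).choose k : ℤ) * ((k+d).choose k : ℤ)
    = ((p:ℤ)+d+k+2) * (((k+p+1).choose k : ℤ) * ((k+d).choose k : ℤ)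
      + ((k+p).choose k : ℤ) * ((k+d+1).choose k : ℤ)) := by
  have h1 := natAbs1 k p
  have h2 := natAbs1 k d
  have hne : ((p:ℤ)+1) * ((d:ℤ)+1) ≠ 0 := by positivity
  apply mul_left_cancel₀ hne
  linear_combination (((d:ℤ)+1) * (((p:ℤ)+d+2) * ((k+d+1).choose k : ℤ) - ((p:ℤ)+d+k+2) * ((k+d).choose k : ℤ))) * h1 + ((k:ℤ)*((d:ℤ)+1)*((k+p).choose k : ℤ)) * h2

noncomputable def Ls (k n r : ℕ) : ℤ :=
  ∑ i ∈ range (n+1),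
    (-1:ℤ)^(r+i) * ((k+i).choose k : ℤ) * ((k+(n-i)).choose k : ℤ) * ichoose (2*(k:ℤ)+1) ((r:ℤ) - i)

noncomputable def Rs (k n r : ℕ) : ℤ :=
  (-1:ℤ)^(r+n) * ichoose ((n:ℤ)+2*k+1) (r:ℤ) * ichoose ((r:ℤ)-k-1) (n:ℤ)

lemma base0 (k r : ℕ) : Ls k 0 r = Rs k 0 r := by
  unfold Ls Rs
  rw [sum_range_one]
  rw [show ((0:ℕ):ℤ) = (0:ℤ) from rfl, ichoose_zero_right]
  rw [show ((0:ℤ)+2*(k:ℤ)+1) = 2*(k:ℤ)+1 by ring]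
  simp

lemma base_r0 (k n : ℕ) : Ls k n 0 = Rs k n 0 := by
  unfold Ls Rs
  rw [Finset.sum_eq_single 0]
  · rw [show (((0:ℕ)):ℤ) - ((0:ℕ):ℤ) = ((0:ℕ):ℤ) by norm_num,
      show 2*(k:ℤ)+1 = (((2*k+1:ℕ)):ℤ) by push_cast; ring,
      show ((0:ℕ):ℤ) = (((0:ℕ):ℕ):ℤ) from rfl, ichoose_natCast,
      show (((0:ℕ)):ℤ) - (k:ℤ) - 1 = (-(k:ℤ)-1) by push_cast; ring,
      show ((n:ℤ)) = ((n:ℕ):ℤ) from rfl, ichoose_neg_int (k:ℤ) n (by positivity),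
      show ((n:ℤ)+2*(k:ℤ)+1) = (((n+2*k+1 : ℕ)):ℤ) by push_cast; ring, ichoose_natCast]
    have hsymm : (k+n).choose k = (n + (k:ℤ).toNat).choose n := by
      rw [show ((k:ℤ).toNat) = k by omega, show n + k = k + n by omega,
        ← Nat.choose_symm (by omega : k ≤ k + n)]
      congr 1
      omega
    simp [hsymm]
    rw [← mul_assoc, ← pow_add]
    rw [show n+n = 2*n by ring, pow_mul]
    norm_num
  · intro i hi hne
    rw [ichoose_of_neg (show (((0:ℕ)):ℤ) - (i:ℤ) < 0 by omega)]
    ring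
  · intro h
    simp at h

lemma base1 (k r : ℕ) : Ls k 1 r = Rs k 1 r := by
  unfold Ls Rs
  rw [Finset.sum_range_succ, Finset.sum_range_one]
  have hp := ichoose_pascal (2*(k:ℤ)+2) (r:ℤ)
  have habs := ichoose_absorb (2*(k:ℤ)+2) (r:ℤ)
  rw [show (2*(k:ℤ)+2-1) = 2*(k:ℤ)+1 by ring] at hp habs
  rw [show ((1:ℕ):ℤ)+2*(k:ℤ)+1 = 2*(k:ℤ)+2 by push_cast; ring]
  rw [show ((1:ℕ):ℤ) = (1:ℤ) from rfl, ichoose_one_right]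
  simp only [Nat.choose_self, Nat.sub_self, Nat.sub_zero, Nat.add_zero,
    Nat.choose_succ_self_right, Nat.cast_one, Nat.cast_ofNat, Nat.cast_zero, sub_zero,
    Nat.cast_add, Nat.cast_mul]
  linear_combination ((-1:ℤ)^r) * habs + (((-1:ℤ)^(r+1))*((k:ℤ)+1)) * hp

lemma recc (k n r : ℕ) :
    ((n:ℤ)+2) * Rs k (n+2) (r+1) + ((n:ℤ)+2*k+2) * Rs k n r
      = ((n:ℤ)+k+2) * (Rs k (n+1) (r+1) + Rs k (n+1) r) := by
  unfold Rs
  push_cast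
  rw [show ((n:ℤ)+2+2*k+1) = (n:ℤ)+2*k+3 by ring,
    show ((r:ℤ)+1-k-1) = (r:ℤ)-k by ring,
    show ((n:ℤ)+1+2*k+1) = (n:ℤ)+2*k+2 by ring]
  have h1 := ichoose_absorb ((r:ℤ)-k) ((n:ℤ)+2)
  rw [show ((r:ℤ)-k-1) = (r:ℤ)-k-1 from rfl, show ((n:ℤ)+2-1) = (n:ℤ)+1 by ring] at h1
  have h2 := ichoose_pascal ((r:ℤ)-k) ((n:ℤ)+1)
  rw [show ((n:ℤ)+1-1) = (n:ℤ) by ring] at h2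
  have h3 := ichoose_pascal ((n:ℤ)+2*k+3) ((r:ℤ)+1)
  rw [show ((n:ℤ)+2*k+3-1) = (n:ℤ)+2*k+2 by ring, show ((r:ℤ)+1-1) = (r:ℤ) by ring] at h3
  have h4 := ichoose_absorb' ((n:ℤ)+2*k+2) ((r:ℤ)+1)
  rw [show ((r:ℤ)+1-1) = (r:ℤ) by ring] at h4
  have h5 := ichoose_absorb ((n:ℤ)+2*k+2) ((r:ℤ)+1)
  rw [show ((n:ℤ)+2*k+2-1) = (n:ℤ)+2*k+1 by ring, show ((r:ℤ)+1-1) = (r:ℤ) by ring] at h5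
  have h6 := ichoose_absorb' ((r:ℤ)-k-1) ((n:ℤ)+1)
  rw [show ((n:ℤ)+1-1) = (n:ℤ) by ring] at h6
  linear_combination
    (-((-1:ℤ)^(r+n)) * ichoose ((n:ℤ)+2*k+3) ((r:ℤ)+1)) * h1
    + (-((-1:ℤ)^(r+n)) * ((n:ℤ)+k+2) * ichoose ((n:ℤ)+2*k+2) ((r:ℤ)+1)) * h2
    + (-((-1:ℤ)^(r+n)) * ((r:ℤ)-k) * ichoose ((r:ℤ)-k-1) ((n:ℤ)+1)) * h3
    + (-((-1:ℤ)^(r+n)) * ichoose ((r:ℤ)-k-1) ((n:ℤ)+1)) * h4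
    + (-((-1:ℤ)^(r+n)) * ichoose ((r:ℤ)-k-1) ((n:ℤ))) * h5
    + (-((-1:ℤ)^(r+n)) * ichoose ((n:ℤ)+2*k+2) ((r:ℤ)+1)) * h6

lemma recl (k n r : ℕ) :
    ((n:ℤ)+2) * Ls k (n+2) (r+1) + ((n:ℤ)+2*k+2) * Ls k n r
      = ((n:ℤ)+k+2) * (Ls k (n+1) (r+1) + Ls k (n+1) r) := by
  unfold Ls
  rw [Finset.sum_range_succ' (fun i => (-1:ℤ)^(r+1+i) * ((k+i).choose k : ℤ) * ((k+(n+2-i)).choose k : ℤ) * ichoose (2*(k:ℤ)+1) ((r+1:ℕ) - (i:ℤ))) (n+2)]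
  rw [Finset.sum_range_succ (fun i => (-1:ℤ)^(r+1+(i+1)) * ((k+(i+1)).choose k : ℤ) * ((k+(n+2-(i+1))).choose k : ℤ) * ichoose (2*(k:ℤ)+1) ((r+1:ℕ) - ((i+1:ℕ):ℤ))) (n+1)]
  rw [Finset.sum_range_succ' (fun i => (-1:ℤ)^(r+1+i) * ((k+i).choose k : ℤ) * ((k+(n+1-i)).choose k : ℤ) * ichoose (2*(k:ℤ)+1) ((r+1:ℕ) - (i:ℤ))) (n+1)]
  rw [Finset.sum_range_succ (fun i => (-1:ℤ)^(r+i) * ((k+i).choose k : ℤ) * ((k+(n+1-i)).choose k : ℤ) * ichoose (2*(k:ℤ)+1) ((r:ℕ) - (i:ℤ))) (n+1)]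
  simp only [show n+1+1 = n+2 by omega, Nat.add_zero, Nat.sub_zero, Nat.sub_self,
    Nat.cast_zero, sub_zero, add_zero]
  have hper : ∀ i ∈ range (n+1),
      ((n:ℤ)+2) * ((-1:ℤ)^(r+1+(i+1)) * ((k+(i+1)).choose k : ℤ) * ((k+(n+2-(i+1))).choose k : ℤ) * ichoose (2*(k:ℤ)+1) (((r+1:ℕ):ℤ) - ((i+1:ℕ):ℤ)))
      + ((n:ℤ)+2*k+2) * ((-1:ℤ)^(r+i) * ((k+i).choose k : ℤ) * ((k+(n-i)).choose k : ℤ) * ichoose (2*(k:ℤ)+1) ((r:ℤ) - (i:ℤ)))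
      - ((n:ℤ)+k+2) * ((-1:ℤ)^(r+1+(i+1)) * ((k+(i+1)).choose k : ℤ) * ((k+(n+1-(i+1))).choose k : ℤ) * ichoose (2*(k:ℤ)+1) (((r+1:ℕ):ℤ) - ((i+1:ℕ):ℤ)))
      - ((n:ℤ)+k+2) * ((-1:ℤ)^(r+i) * ((k+i).choose k : ℤ) * ((k+(n+1-i)).choose k : ℤ) * ichoose (2*(k:ℤ)+1) ((r:ℤ) - (i:ℤ))) = 0 := by
    intro i hi
    simp only [mem_range] at hi
    obtain ⟨d, rfl⟩ : ∃ d, n = i + d := ⟨n - i, by omega⟩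
    rw [show i+d+2-(i+1) = d+1 by omega, show i+d+1-(i+1) = d by omega,
      show i+d-i = d by omega, show i+d+1-i = d+1 by omega,
      show k+(i+1) = k+i+1 by omega, show k+(d+1) = k+d+1 by omega]
    have hI : (((r+1:ℕ):ℤ) - ((i+1:ℕ):ℤ)) = ((r:ℤ) - (i:ℤ)) := by push_cast; ring
    rw [hI]
    have := MI k i d
    push_cast
    linear_combination (((-1:ℤ)^(r+i)) * ichoose (2*(k:ℤ)+1) ((r:ℤ) - (i:ℤ))) * this
  have hsum := Finset.sum_eq_zero hper
  rw [Finset.sum_sub_distrib, Finset.sum_sub_distrib, Finset.sum_add_distrib,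
    ← Finset.mul_sum, ← Finset.mul_sum, ← Finset.mul_sum, ← Finset.mul_sum] at hsum
  have hb0 := natAbs1 k (n+1)
  rw [show k+(n+1)+1 = k+(n+2) by omega] at hb0
  push_cast at hb0
  rw [show (((r+1:ℕ)):ℤ) - (((n+2:ℕ)):ℤ) = (r:ℤ) - (((n+1:ℕ)):ℤ) by push_cast; ring]
  linear_combination hsum
    + ((-1:ℤ)^(r+1) * ((k.choose k : ℕ) : ℤ) * ichoose (2*(k:ℤ)+1) (((r+1:ℕ)):ℤ)) * hb0
    + ((-1:ℤ)^(r+1+(n+2)) * ((k.choose k : ℕ) : ℤ) * ichoose (2*(k:ℤ)+1) ((r:ℤ) - (((n+1:ℕ)):ℤ))) * hb0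


lemma main_eq : ∀ n k r : ℕ, Ls k n r = Rs k n r := by
  intro n
  induction n using Nat.strong_induction_on with
  | _ n ih =>
    rcases n with _ | _ | m
    · exact fun k r => base0 k r
    · exact fun k r => base1 k r
    · intro k r
      rcases r with _ | r
      · exact base_r0 k (m+2)
      · have h1 := recl k m r
        have h2 := recc k m r
        have e0 := ih m (by omega) k r
        have e1a := ih (m+1) (by omega) k (r+1)
        have e1b := ih (m+1) (by omega) k r
        have key : ((m:ℤ)+2) * Ls k (m+2) (r+1) = ((m:ℤ)+2) * Rs k (m+2) (r+1) := by
          linear_combination h1 - h2 - ((m:ℤ)+2*k+2) * e0 + ((m:ℤ)+k+2) * e1a + ((m:ℤ)+k+2) * e1b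
        exact mul_left_cancel₀ (by positivity) key

end Aux

theorem stmt1 (k m r : ℕ) (h : 2 * k ≤ m) :
    ∑ i ∈ range (m - 2 * k + 1),
        (-1 : ℤ) ^ (r + i) * ((k + i).choose k : ℤ) * ((m - k - i).choose k : ℤ) *
          ichoose (2 * k + 1) ((r : ℤ) - i) =
      (-1 : ℤ) ^ (r + m) * ((m + 1).choose r : ℤ) * ichoose ((r : ℤ) - k - 1) ((m : ℤ) - 2 * k) := by
  set n := m - 2 * k with hn
  have hm : m = n + 2 * k := by omega
  have key := main_eq n k r
  unfold Ls Rs at key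
  calc ∑ i ∈ range (m - 2 * k + 1),
        (-1 : ℤ) ^ (r + i) * ((k + i).choose k : ℤ) * ((m - k - i).choose k : ℤ) *
          ichoose (2 * k + 1) ((r : ℤ) - i)
      = ∑ i ∈ range (n+1),
        (-1:ℤ)^(r+i) * ((k+i).choose k : ℤ) * ((k+(n-i)).choose k : ℤ) * ichoose (2*(k:ℤ)+1) ((r:ℤ) - i) := by
        apply Finset.sum_congr (by rw [← hn])
        intro i hi
        simp only [mem_range] at hi
        rw [show m - k - i = k + (n - i) by omega]
    _ = (-1:ℤ)^(r+n) * ichoose ((n:ℤ)+2*k+1) (r:ℤ) * ichoose ((r:ℤ)-k-1) (n:ℤ) := key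
    _ = (-1 : ℤ) ^ (r + m) * ((m + 1).choose r : ℤ) * ichoose ((r : ℤ) - k - 1) ((m : ℤ) - 2 * k) := by
        rw [show ((n:ℤ)+2*k+1) = (((n+2*k+1 : ℕ)):ℤ) by push_cast; ring, ichoose_natCast,
          show n+2*k+1 = m+1 by omega,
          show ((m:ℤ) - 2*k) = ((n:ℕ):ℤ) by omega,
          show r+m = r+n+2*k by omega]
        rw [pow_add (-1:ℤ) (r+n) (2*k), pow_mul]
        norm_num
end

section
/- For all positive integers l and all nonnegative integers m, in the field of rational functions in q: ([l][l+1]/q^l)^{m+1} - ([l-1][l]/q^{l-1})^{m+1} = [2] \sum_{k=0}^{\lfloor m/2 \rfloor} h_{m-2k}(\{1,q\}^{k+1}) \cdot ([2l]/[2]) \cdot [l]^{2(m-k)} \cdot q^{-l(m-k+1)}. -/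
open Finset

/-- The `q`-integer `[n] = (1-q^n)/(1-q)` in `ℚ(q)`. -/
noncomputable def qint (n : ℕ) : RatFunc ℚ :=
  (1 - RatFunc.X ^ n) / (1 - RatFunc.X)

/-- `h_j({1,q}^{k+1})`: the complete homogeneous symmetric polynomial of degree `j`
in `2(k+1)` variables, `k+1` specialized to `q` and `k+1` to `1`. -/
noncomputable def hcomp (j k : ℕ) : RatFunc ℚ :=
  ∑ i ∈ range (j + 1),
    ((k + i).choose k : RatFunc ℚ) * ((j + k - i).choose k : RatFunc ℚ) * RatFunc.X ^ i

lemma one_sub_X_pow_ne (n : ℕ) (hn : 0 < n) : (1 : RatFunc ℚ) - RatFunc.X ^ n ≠ 0 := by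
  rw [sub_ne_zero]
  intro h
  have h2 : (algebraMap (Polynomial ℚ) (RatFunc ℚ)) 1 = algebraMap (Polynomial ℚ) (RatFunc ℚ) (Polynomial.X ^ n) := by
    simpa [map_pow, RatFunc.algebraMap_X] using h
  have h3 := RatFunc.algebraMap_injective ℚ h2
  have := congrArg Polynomial.natDegree h3
  simp [Polynomial.natDegree_X_pow] at this
  omega

lemma qint_ne (n : ℕ) (hn : 0 < n) : qint n ≠ 0 :=
  div_ne_zero (one_sub_X_pow_ne n hn) (by simpa using one_sub_X_pow_ne 1 one_pos)

lemma hcomp_zero (k : ℕ) : hcomp 0 k = 1 := by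
  simp [hcomp]

lemma hcomp_one (k : ℕ) : hcomp 1 k = ((k : RatFunc ℚ)+1) * (1 + RatFunc.X) := by
  have h : (1+k).choose k = k+1 := by rw [Nat.add_comm]; exact Nat.choose_succ_self_right k
  rw [hcomp, sum_range_succ, sum_range_one]
  simp [h, Nat.choose_succ_self_right]
  ring

lemma hcomp_zero_right (j : ℕ) : hcomp j 0 = ∑ i ∈ range (j+1), RatFunc.X ^ i := by
  rw [hcomp]; exact sum_congr rfl fun i hi => by simp

lemma hrec0 (j : ℕ) : hcomp (j+2) 0 + RatFunc.X * hcomp j 0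
    = (1+RatFunc.X) * hcomp (j+1) 0 := by
  rw [hcomp_zero_right, hcomp_zero_right, hcomp_zero_right,
    show j+2+1 = (j+1)+1+1 from rfl, sum_range_succ, show (j+1)+1 = j+1+1 from rfl,
    sum_range_succ]
  ring

lemma hone_rec (k : ℕ) : hcomp 1 (k+1) = (1 + RatFunc.X) * hcomp 0 (k+1) + hcomp 1 k := by
  rw [hcomp_one, hcomp_one, show hcomp 0 (k+1) = 1 from by simp [hcomp]]
  push_cast; ring

lemma pascal2 (k n r : ℕ) :
    (n+1).choose (k+1) * (r+1).choose (k+1) + n.choose (k+1) * r.choose (k+1)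
    = (n+1).choose (k+1) * r.choose (k+1) + n.choose (k+1) * (r+1).choose (k+1)
      + n.choose k * r.choose k := by
  rw [Nat.choose_succ_succ n k, Nat.choose_succ_succ r k]; ring

lemma pascal2C (k n r : ℕ) :
    ((n+1).choose (k+1) : RatFunc ℚ) * ((r+1).choose (k+1) : RatFunc ℚ)
      + (n.choose (k+1) : RatFunc ℚ) * (r.choose (k+1) : RatFunc ℚ)
    = ((n+1).choose (k+1) : RatFunc ℚ) * (r.choose (k+1) : RatFunc ℚ)
      + (n.choose (k+1) : RatFunc ℚ) * ((r+1).choose (k+1) : RatFunc ℚ)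
      + (n.choose k : RatFunc ℚ) * (r.choose k : RatFunc ℚ) := by
  exact_mod_cast congrArg (Nat.cast (R := RatFunc ℚ)) (pascal2 k n r)

lemma hshift (J k : ℕ) : RatFunc.X * hcomp J (k+1)
    = ∑ i ∈ range (J+2), ((k+i).choose (k+1) : RatFunc ℚ)
        * ((J+k+2-i).choose (k+1) : RatFunc ℚ) * RatFunc.X ^ i := by
  have rhs_eq : ∑ i ∈ range (J+2), ((k+i).choose (k+1) : RatFunc ℚ)
        * ((J+k+2-i).choose (k+1) : RatFunc ℚ) * RatFunc.X ^ i
      = ∑ i ∈ range (J+1), ((k+(i+1)).choose (k+1) : RatFunc ℚ)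
        * ((J+k+2-(i+1)).choose (k+1) : RatFunc ℚ) * RatFunc.X ^ (i+1) := by
    rw [Finset.sum_range_succ']
    simp [Nat.choose_eq_zero_of_lt]
  rw [hcomp, Finset.mul_sum, rhs_eq]
  refine sum_congr rfl fun i hi => ?_
  have hi' : i ≤ J := by simpa [Nat.lt_succ_iff] using hi
  rw [show k+(i+1) = k+1+i from by omega, show J+k+2-(i+1) = J+(k+1)-i from by omega]
  ring

lemma hrec (j k : ℕ) :
    hcomp (j+2) (k+1) + RatFunc.X * hcomp j (k+1)
      = (1+RatFunc.X) * hcomp (j+1) (k+1) + hcomp (j+2) k := by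
  have shift_j : RatFunc.X * hcomp j (k+1)
      = ∑ i ∈ range (j+3), ((k+i).choose (k+1) : RatFunc ℚ)
          * ((j+k+2-i).choose (k+1) : RatFunc ℚ) * RatFunc.X ^ i := by
    rw [hshift j k]
    conv_rhs => rw [Finset.sum_range_succ]
    rw [show j+k+2-(j+2) = k from by omega]
    simp [Nat.choose_eq_zero_of_lt]
  have ext1 : hcomp (j+1) (k+1)
      = ∑ i ∈ range (j+3), ((k+1+i).choose (k+1) : RatFunc ℚ)
          * ((j+1+(k+1)-i).choose (k+1) : RatFunc ℚ) * RatFunc.X ^ i := by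
    rw [hcomp]
    conv_rhs => rw [Finset.sum_range_succ]
    rw [show j+1+(k+1)-(j+2) = k from by omega]
    simp [Nat.choose_eq_zero_of_lt]
  have shift_j1 := hshift (j+1) k
  rw [add_mul, one_mul, shift_j, shift_j1, ext1, hcomp, hcomp,
    ← Finset.sum_add_distrib, ← Finset.sum_add_distrib, ← Finset.sum_add_distrib]
  refine sum_congr rfl fun i hi => ?_
  have hi' : i ≤ j+2 := by simpa [Nat.lt_succ_iff] using hi
  rw [show k+1+i = (k+i)+1 from by omega,
      show j+2+(k+1)-i = (j+k+2-i)+1 from by omega,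
      show j+1+k+2-i = (j+k+2-i)+1 from by omega,
      show j+1+(k+1)-i = j+k+2-i from by omega,
      show j+2+k-i = j+k+2-i from by omega]
  linear_combination RatFunc.X ^ i * pascal2C k (k+i) (j+k+2-i)

noncomputable def Rsum (t : RatFunc ℚ) (m : ℕ) : RatFunc ℚ :=
  ∑ k ∈ range (m/2+1), hcomp (m - 2*k) k * t^k

lemma Rsum_rec (t : RatFunc ℚ) (m : ℕ) :
    Rsum t (m+2) + RatFunc.X * Rsum t m
      = (1+RatFunc.X) * Rsum t (m+1) + t * Rsum t m := by
  obtain ⟨s, rfl | rfl⟩ := Nat.even_or_odd' m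
  · -- m = 2s
    simp only [Rsum, show (2*s+2)/2 = s+1 from by omega, show (2*s+1)/2 = s from by omega,
      show (2*s)/2 = s from by omega]
    have L : ∑ k ∈ range (s+1+1), hcomp (2*s+2-2*k) k * t^k
        + RatFunc.X * ∑ k ∈ range (s+1), hcomp (2*s-2*k) k * t^k
        = ∑ k ∈ range (s+1), (hcomp (2*s+2-2*k) k + RatFunc.X * hcomp (2*s-2*k) k) * t^k
          + t^(s+1) := by
      rw [Finset.sum_range_succ, show 2*s+2-2*(s+1) = 0 from by omega, hcomp_zero,
        Finset.mul_sum, one_mul, add_right_comm, ← Finset.sum_add_distrib]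
      congr 1
      exact sum_congr rfl fun k _ => by ring
    rw [L]
    have T : ∀ k ∈ range (s+1),
        (hcomp (2*s+2-2*k) k + RatFunc.X * hcomp (2*s-2*k) k) * t^k
        = ((1+RatFunc.X) * hcomp (2*s+1-2*k) k
            + (if k = 0 then 0 else hcomp (2*s+2-2*k) (k-1))) * t^k := by
      intro k hk
      have hks : k < s+1 := mem_range.mp hk
      match k with
      | 0 =>
        norm_num
        linear_combination hrec0 (2*s)
      | (k'+1) =>
        simp only [Nat.add_sub_cancel, if_neg (Nat.succ_ne_zero k')]
        rw [show 2*s+2-2*(k'+1) = (2*s-2*(k'+1)) + 2 from by omega,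
          show 2*s+1-2*(k'+1) = (2*s-2*(k'+1)) + 1 from by omega,
          hrec (2*s-2*(k'+1)) k']
    rw [Finset.sum_congr rfl T]
    have split : ∑ k ∈ range (s+1),
        ((1+RatFunc.X) * hcomp (2*s+1-2*k) k
          + (if k = 0 then 0 else hcomp (2*s+2-2*k) (k-1))) * t^k
        = (1+RatFunc.X) * ∑ k ∈ range (s+1), hcomp (2*s+1-2*k) k * t^k
          + ∑ k ∈ range (s+1), (if k = 0 then 0 else hcomp (2*s+2-2*k) (k-1)) * t^k := by
      rw [Finset.mul_sum, ← Finset.sum_add_distrib]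
      exact sum_congr rfl fun k _ => by ring
    rw [split]
    have ite_sum : ∑ k ∈ range (s+1), (if k = 0 then 0 else hcomp (2*s+2-2*k) (k-1)) * t^k
        = t * ∑ k ∈ range (s+1), hcomp (2*s-2*k) k * t^k - t^(s+1) := by
      rw [Finset.sum_range_succ']
      simp only [Nat.succ_ne_zero, if_false, ite_false, ite_true, if_true,
        Nat.add_sub_cancel, zero_mul, add_zero, pow_zero, mul_one]
      have e1 : ∑ k ∈ range s, hcomp (2*s+2-2*(k+1)) k * t^(k+1)
          = ∑ k ∈ range s, t * (hcomp (2*s-2*k) k * t^k) :=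
        sum_congr rfl fun k _ => by
          rw [show 2*s+2-2*(k+1) = 2*s-2*k from by omega]; ring
      rw [e1, Finset.sum_range_succ (f := fun k => hcomp (2*s-2*k) k * t^k),
        show 2*s-2*s = 0 from by omega, hcomp_zero, mul_add, Finset.mul_sum]
      ring
    rw [ite_sum]; ring
  · -- m = 2s+1
    simp only [Rsum, show (2*s+1+2)/2 = s+1 from by omega, show (2*s+1+1)/2 = s+1 from by omega,
      show (2*s+1)/2 = s from by omega]
    have L : ∑ k ∈ range (s+1+1), hcomp (2*s+1+2-2*k) k * t^k
        + RatFunc.X * ∑ k ∈ range (s+1), hcomp (2*s+1-2*k) k * t^k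
        = ∑ k ∈ range (s+1), (hcomp (2*s+3-2*k) k + RatFunc.X * hcomp (2*s+1-2*k) k) * t^k
          + hcomp 1 (s+1) * t^(s+1) := by
      rw [Finset.sum_range_succ, show 2*s+1+2-2*(s+1) = 1 from by omega,
        Finset.mul_sum, add_right_comm, ← Finset.sum_add_distrib]
      congr 1
      exact sum_congr rfl fun k _ => by
        rw [show 2*s+1+2-2*k = 2*s+3-2*k from by omega]; ring
    rw [L]
    have T : ∀ k ∈ range (s+1),
        (hcomp (2*s+3-2*k) k + RatFunc.X * hcomp (2*s+1-2*k) k) * t^k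
        = ((1+RatFunc.X) * hcomp (2*s+2-2*k) k
            + (if k = 0 then 0 else hcomp (2*s+3-2*k) (k-1))) * t^k := by
      intro k hk
      have hks : k < s+1 := mem_range.mp hk
      match k with
      | 0 =>
        norm_num
        linear_combination hrec0 (2*s+1)
      | (k'+1) =>
        simp only [Nat.add_sub_cancel, if_neg (Nat.succ_ne_zero k')]
        rw [show 2*s+3-2*(k'+1) = (2*s+1-2*(k'+1)) + 2 from by omega,
          show 2*s+2-2*(k'+1) = (2*s+1-2*(k'+1)) + 1 from by omega,
          hrec (2*s+1-2*(k'+1)) k']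
    rw [Finset.sum_congr rfl T]
    have split : ∑ k ∈ range (s+1),
        ((1+RatFunc.X) * hcomp (2*s+2-2*k) k
          + (if k = 0 then 0 else hcomp (2*s+3-2*k) (k-1))) * t^k
        = (1+RatFunc.X) * ∑ k ∈ range (s+1), hcomp (2*s+2-2*k) k * t^k
          + ∑ k ∈ range (s+1), (if k = 0 then 0 else hcomp (2*s+3-2*k) (k-1)) * t^k := by
      rw [Finset.mul_sum, ← Finset.sum_add_distrib]
      exact sum_congr rfl fun k _ => by ring
    rw [split]
    have ite_sum : ∑ k ∈ range (s+1), (if k = 0 then 0 else hcomp (2*s+3-2*k) (k-1)) * t^k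
        = t * ∑ k ∈ range (s+1), hcomp (2*s+1-2*k) k * t^k - hcomp 1 s * t^(s+1) := by
      rw [Finset.sum_range_succ']
      simp only [Nat.succ_ne_zero, if_false, ite_false, ite_true, if_true,
        Nat.add_sub_cancel, zero_mul, add_zero, pow_zero, mul_one]
      have e1 : ∑ k ∈ range s, hcomp (2*s+3-2*(k+1)) k * t^(k+1)
          = ∑ k ∈ range s, t * (hcomp (2*s+1-2*k) k * t^k) :=
        sum_congr rfl fun k _ => by
          rw [show 2*s+3-2*(k+1) = 2*s+1-2*k from by omega]; ring
      rw [e1, Finset.sum_range_succ (f := fun k => hcomp (2*s+1-2*k) k * t^k),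
        show 2*s+1-2*s = 1 from by omega, mul_add, Finset.mul_sum]
      ring
    rw [ite_sum]
    have norm1 : ∑ k ∈ range (s+1+1), hcomp (2*s+1+1-2*k) k * t^k
        = ∑ k ∈ range (s+1+1), hcomp (2*s+2-2*k) k * t^k :=
      sum_congr rfl fun k _ => by rw [show 2*s+1+1-2*k = 2*s+2-2*k from by omega]
    rw [norm1]
    conv_rhs => rw [Finset.sum_range_succ]
    rw [show 2*s+2-2*(s+1) = 0 from by omega, hcomp_zero, hone_rec s, hcomp_zero]
    ring

lemma Ssum_rec (α β : RatFunc ℚ) (m : ℕ) :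
    ∑ i ∈ range (m+3), α^i * β^(m+2-i) + α*β * ∑ i ∈ range (m+1), α^i * β^(m-i)
      = (α+β) * ∑ i ∈ range (m+2), α^i * β^(m+1-i) := by
  have e2 : ∑ i ∈ range (m+3), α^i * β^(m+2-i)
      = β * ∑ i ∈ range (m+2), α^i * β^(m+1-i) + α^(m+2) := by
    rw [Finset.sum_range_succ, show m+2-(m+2) = 0 from by omega, pow_zero, mul_one,
      Finset.mul_sum]
    congr 1
    exact sum_congr rfl fun i hi => by
      have : i ≤ m+1 := by simpa [Nat.lt_succ_iff] using hi
      rw [show m+2-i = (m+1-i)+1 from by omega, pow_succ]; ring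
  have e3 : ∑ i ∈ range (m+2), α^i * β^(m+1-i)
      = β * ∑ i ∈ range (m+1), α^i * β^(m-i) + α^(m+1) := by
    rw [Finset.sum_range_succ, show m+1-(m+1) = 0 from by omega, pow_zero, mul_one,
      Finset.mul_sum]
    congr 1
    exact sum_congr rfl fun i hi => by
      have : i ≤ m := by simpa [Nat.lt_succ_iff] using hi
      rw [show m+1-i = (m-i)+1 from by omega, pow_succ]; ring
  linear_combination e2 - α * e3

lemma key (α β t : RatFunc ℚ) (hs : α + β = 1 + RatFunc.X) (hp : α * β = RatFunc.X - t) :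
    ∀ m, ∑ i ∈ range (m+1), α^i * β^(m-i) = Rsum t m := by
  have main : ∀ m, (∑ i ∈ range (m+1), α^i * β^(m-i) = Rsum t m)
      ∧ (∑ i ∈ range (m+2), α^i * β^(m+1-i) = Rsum t (m+1)) := by
    intro m
    induction m with
    | zero =>
      constructor
      · simp [Rsum, hcomp]
      · rw [Rsum]
        simp only [show (1:ℕ)/2 = 0 from rfl]
        rw [Finset.sum_range_one, Finset.sum_range_succ, Finset.sum_range_one, hcomp_one]
        simp [hs]
        linear_combination hs
    | succ n ih =>
      refine ⟨ih.2, ?_⟩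
      have hrec := Rsum_rec t n
      have hS := Ssum_rec α β n
      rw [ih.1, ih.2, hs, hp] at hS
      linear_combination hS - hrec
  exact fun m => (main m).1

lemma scale (u α β : RatFunc ℚ) (m : ℕ) :
    ∑ i ∈ range (m+1), (u*α)^i * (u*β)^(m-i)
      = u^m * ∑ i ∈ range (m+1), α^i * β^(m-i) := by
  rw [Finset.mul_sum]
  exact sum_congr rfl fun i hi => by
    have hi' : i ≤ m := by simpa [Nat.lt_succ_iff] using hi
    rw [mul_pow, mul_pow, show u^m = u^i * u^(m-i) from by rw [← pow_add]; congr 1; omega]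
    ring

theorem stmt3 (l : ℕ) (hl : 0 < l) (m : ℕ) :
    (qint l * qint (l + 1) / RatFunc.X ^ l) ^ (m + 1) -
        (qint (l - 1) * qint l / RatFunc.X ^ (l - 1)) ^ (m + 1) =
      qint 2 * ∑ k ∈ range (m / 2 + 1),
          hcomp (m - 2 * k) k * (qint (2 * l) / qint 2) * qint l ^ (2 * (m - k)) *
            RatFunc.X ^ (-((l : ℤ) * ((m : ℤ) - k + 1))) := by
  obtain ⟨n, rfl⟩ : ∃ n, l = n + 1 := ⟨l - 1, by omega⟩
  simp only [Nat.add_sub_cancel]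
  have hX : (RatFunc.X : RatFunc ℚ) ≠ 0 := RatFunc.X_ne_zero
  have h1 : (1 : RatFunc ℚ) - RatFunc.X ≠ 0 := by simpa using one_sub_X_pow_ne 1 one_pos
  have h1n : (1 : RatFunc ℚ) - RatFunc.X ^ (n+1) ≠ 0 := one_sub_X_pow_ne _ (by omega)
  have hP : qint (n+1) ≠ 0 := qint_ne _ (by omega)
  have hq2 : qint 2 ≠ 0 := qint_ne _ (by omega)
  set α := qint (n+1+1) / qint (n+1) with hα
  set β := RatFunc.X * qint n / qint (n+1) with hβ
  set u := qint (n+1)^2 / RatFunc.X^(n+1) with hu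
  set t := RatFunc.X^(n+1) / qint (n+1)^2 with ht
  have hut : u * t = 1 := by
    rw [hu, ht]
    field_simp
  have hs : α + β = 1 + RatFunc.X := by
    rw [hα, hβ]
    simp only [qint]
    field_simp
    ring
  have hp : α * β = RatFunc.X - t := by
    rw [hα, hβ, ht]
    simp only [qint]
    field_simp
    ring
  have hA : qint (n+1) * qint (n+1+1) / RatFunc.X^(n+1) = u * α := by
    rw [hu, hα]
    field_simp
  have hB : qint n * qint (n+1) / RatFunc.X^n = u * β := by
    rw [hu, hβ]
    field_simp
    ring
  have hD : u * α - u * β = qint (2*(n+1)) / RatFunc.X^(n+1) := by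
    rw [hu, hα, hβ]
    simp only [qint]
    field_simp
    ring
  rw [hA, hB]
  have geom := geom_sum₂_mul (u*α) (u*β) (m+1)
  simp only [Nat.add_sub_cancel] at geom
  rw [← geom, scale, key α β t hs hp m, hD, Rsum, Finset.mul_sum, Finset.sum_mul,
    Finset.mul_sum]
  refine Finset.sum_congr rfl fun k hk => ?_
  have hkm : k ≤ m := le_trans (Nat.lt_succ_iff.mp (mem_range.mp hk)) (Nat.div_le_self m 2)
  obtain ⟨e, he⟩ : ∃ e, m = e + k := ⟨m - k, by omega⟩
  subst he
  rw [show e + k - k = e from by omega]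
  have hz : (RatFunc.X : RatFunc ℚ) ^ (-((↑(n+1) : ℤ) * ((↑(e+k) : ℤ) - ↑k + 1)))
      = (RatFunc.X ^ ((n+1)*e) * RatFunc.X ^ (n+1))⁻¹ := by
    rw [show -((↑(n+1) : ℤ) * ((↑(e+k) : ℤ) - ↑k + 1)) = -(((n+1)*e + (n+1) : ℕ) : ℤ) from by
      push_cast; ring]
    rw [zpow_neg, zpow_natCast, pow_add]
  rw [hz]
  have h2 : u^k * t^k = 1 := by rw [← mul_pow, hut, one_pow]
  have h3 : u^(e+k) * (hcomp (e+k-2*k) k * t^k)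
      = (qint (n+1)^2 / RatFunc.X^(n+1))^e * hcomp (e+k-2*k) k := by
    calc u^(e+k) * (hcomp (e+k-2*k) k * t^k)
        = u^e * hcomp (e+k-2*k) k * (u^k * t^k) := by rw [pow_add]; ring
      _ = u^e * hcomp (e+k-2*k) k := by rw [h2, mul_one]
      _ = _ := by rw [hu]
  rw [h3, div_pow, pow_mul, pow_mul]
  field_simp
end

section
/- Let A = (A_{i,j})_{i,j \in \{1,\dots,m\}} be an invertible lower triangular matrix over a commutative field and let B be its inverse. Then for all 1 \le k \le n \le m, B_{n,k} = \frac{(-1)^{n-k}}{A_{k,k} A_{k+1,k+1} \cdots A_{n,n}} \det\left( A_{k+i+1, k+j} \right)_{i,j \in \{0,1,\dots,n-k-1\}}. -/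
open Finset

theorem stmt5 (F : Type*) [Field F] (m : ℕ) (A B : Matrix (Fin m) (Fin m) F)
    (hLT : ∀ i j : Fin m, i < j → A i j = 0)
    (hdiag : ∀ i : Fin m, A i i ≠ 0)
    (hB : A * B = 1) (hB' : B * A = 1)
    (k n : Fin m) (hkn : k ≤ n) :
    B n k =
      ((-1 : F) ^ ((n : ℕ) - (k : ℕ)) / ∏ i ∈ Finset.Icc k n, A i i) *
        Matrix.det (Matrix.of fun i j : Fin ((n : ℕ) - (k : ℕ)) =>
          A ⟨(k : ℕ) + i + 1, by have := i.isLt; have := n.isLt; omega⟩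
            ⟨(k : ℕ) + j, by have := j.isLt; have := n.isLt; omega⟩) := by
  classical
  have hknn : (k : ℕ) ≤ (n : ℕ) := hkn
  have hnm := n.isLt
  -- Step A : Cramer
  have hBA : ∀ x : Fin m → F, B.mulVec (A.mulVec x) = x := by
    intro x; rw [Matrix.mulVec_mulVec, hB', Matrix.one_mulVec]
  have hcr : Matrix.cramer A (Pi.single k 1) = A.det • B.mulVec (Pi.single k 1) := by
    have h := hBA (Matrix.cramer A (Pi.single k 1))
    rw [Matrix.mulVec_cramer, Matrix.mulVec_smul] at h
    exact h.symm
  have hMdet : (A.updateCol n (Pi.single k 1)).det = A.det * B n k := by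
    have h := congrFun hcr n
    rw [Matrix.cramer_apply] at h
    rw [h]
    simp [Matrix.mulVec_single]
  set Mx := A.updateCol n (Pi.single k 1) with hMxdef
  have hMxe : ∀ r c : Fin m, Mx r c = if c = n then (if r = k then 1 else 0) else A r c := by
    intro r c
    rw [hMxdef, Matrix.updateCol_apply]
    by_cases hc : c = n <;> simp [hc, Pi.single_apply]
  set b : Fin m → Fin 3 := fun i => if (i : ℕ) < (k : ℕ) then 0 else if (i : ℕ) ≤ (n : ℕ) then 1 else 2 with hbdef
  have hb0 : ∀ i : Fin m, b i = 0 ↔ (i : ℕ) < (k : ℕ) := by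
    intro i
    simp only [hbdef]
    split_ifs with h1 h2
    · exact iff_of_true rfl h1
    · exact iff_of_false (by decide) h1
    · exact iff_of_false (by decide) h1
  have hb1 : ∀ i : Fin m, b i = 1 ↔ ((k : ℕ) ≤ (i : ℕ) ∧ (i : ℕ) ≤ (n : ℕ)) := by
    intro i
    simp only [hbdef]
    split_ifs with h1 h2
    · exact iff_of_false (by decide) (by omega)
    · exact iff_of_true rfl (by omega)
    · exact iff_of_false (by decide) (by omega)
  have hb2 : ∀ i : Fin m, b i = 2 ↔ (n : ℕ) < (i : ℕ) := by
    intro i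
    simp only [hbdef]
    split_ifs with h1 h2
    · exact iff_of_false (by decide) (by omega)
    · exact iff_of_false (by decide) (by omega)
    · exact iff_of_true rfl (by omega)
  have hmono : ∀ x y : Fin m, (x : ℕ) ≤ (y : ℕ) → b x ≤ b y := by
    intro x y h
    simp only [hbdef]
    split_ifs <;> first | decide | (exfalso; omega)
  -- Mx is block lower triangular
  have hBT : Matrix.BlockTriangular Mx.transpose b := by
    intro i j hij
    show Mx j i = 0
    have hji : (j : ℕ) < (i : ℕ) := by
      by_contra h
      exact absurd (hmono i j (by omega)) (not_le.mpr hij)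
    rw [hMxe]
    by_cases hin : i = n
    · have hbi : b i = 1 := (hb1 i).mpr ⟨by rw [hin]; exact hknn, by rw [hin]⟩
      have hbj0 : b j = 0 := by
        have h4 : b j < 1 := hbi ▸ hij
        revert h4
        have h3 : ∀ x : Fin 3, x < 1 → x = 0 := by decide
        exact h3 _
      have hjk : (j : ℕ) < (k : ℕ) := (hb0 j).mp hbj0
      rw [if_pos hin, if_neg (by intro h; rw [h] at hjk; omega)]
    · rw [if_neg hin]
      exact hLT j i hji
  have hdet3 : Mx.det = ∏ a : Fin 3, (Mx.toSquareBlock b a).det := by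
    rw [← Matrix.det_transpose Mx, hBT.det_fintype]
    refine Finset.prod_congr rfl fun a _ => ?_
    have : Mx.transpose.toSquareBlock b a = (Mx.toSquareBlock b a).transpose := by
      ext i j; rfl
    rw [this, Matrix.det_transpose]
  -- block 0
  have hP0 : (Mx.toSquareBlock b 0).det = ∏ i : {a : Fin m // b a = 0}, A i.1 i.1 := by
    rw [Matrix.det_of_lowerTriangular]
    · refine Finset.prod_congr rfl fun i _ => ?_
      show Mx i.1 i.1 = A i.1 i.1
      have hik : (i.1 : ℕ) < (k : ℕ) := (hb0 i.1).mp i.2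
      rw [hMxe, if_neg (by intro h; rw [h] at hik; omega)]
    · intro i j hij
      show Mx i.1 j.1 = 0
      have hjk : (j.1 : ℕ) < (k : ℕ) := (hb0 j.1).mp j.2
      rw [hMxe, if_neg (by intro h; rw [h] at hjk; omega)]
      exact hLT i.1 j.1 hij
  -- block 2
  have hP2 : (Mx.toSquareBlock b 2).det = ∏ i : {a : Fin m // b a = 2}, A i.1 i.1 := by
    rw [Matrix.det_of_lowerTriangular]
    · refine Finset.prod_congr rfl fun i _ => ?_
      show Mx i.1 i.1 = A i.1 i.1
      have hik : (n : ℕ) < (i.1 : ℕ) := (hb2 i.1).mp i.2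
      rw [hMxe, if_neg (by intro h; rw [h] at hik; omega)]
    · intro i j hij
      show Mx i.1 j.1 = 0
      have hjk : (n : ℕ) < (j.1 : ℕ) := (hb2 j.1).mp j.2
      rw [hMxe, if_neg (by intro h; rw [h] at hjk; omega)]
      exact hLT i.1 j.1 hij
  -- the equiv for block 1
  have hkc : (k : ℕ) + ((n : ℕ) - (k : ℕ)) = (n : ℕ) := by omega
  let e : Fin ((n : ℕ) - (k : ℕ) + 1) ≃ {a : Fin m // b a = 1} :=
    { toFun := fun j => ⟨⟨(k : ℕ) + j, by have := j.isLt; omega⟩,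
        (hb1 _).mpr ⟨by simp, by simp; have := j.isLt; omega⟩⟩
      invFun := fun i => ⟨(i.1 : ℕ) - (k : ℕ), by
        have := (hb1 i.1).mp i.2; omega⟩
      left_inv := fun j => by
        apply Fin.ext; simp
      right_inv := fun i => by
        have := (hb1 i.1).mp i.2
        apply Subtype.ext; apply Fin.ext; simp; omega }
  have hP1 : (Mx.toSquareBlock b 1).det =
      (-1 : F) ^ ((n : ℕ) - (k : ℕ)) *
        Matrix.det (Matrix.of fun i j : Fin ((n : ℕ) - (k : ℕ)) =>
          A ⟨(k : ℕ) + i + 1, by have := i.isLt; have := n.isLt; omega⟩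
            ⟨(k : ℕ) + j, by have := j.isLt; have := n.isLt; omega⟩) := by
    rw [← Matrix.det_submatrix_equiv_self e (Mx.toSquareBlock b 1)]
    rw [Matrix.det_succ_column _ (Fin.last ((n : ℕ) - (k : ℕ)))]
    rw [Finset.sum_eq_single_of_mem (0 : Fin ((n : ℕ) - (k : ℕ) + 1)) (Finset.mem_univ _)]
    · have hcol : ((Mx.toSquareBlock b 1).submatrix e e) 0 (Fin.last ((n : ℕ) - (k : ℕ))) = 1 := by
        show Mx _ _ = 1
        rw [hMxe, if_pos (by apply Fin.ext; simp [e]; omega),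
          if_pos (by apply Fin.ext; simp [e])]
      have hsub : (((Mx.toSquareBlock b 1).submatrix e e).submatrix
            (Fin.succAbove 0) (Fin.succAbove (Fin.last ((n : ℕ) - (k : ℕ))))) =
          Matrix.of (fun i j : Fin ((n : ℕ) - (k : ℕ)) =>
            A ⟨(k : ℕ) + i + 1, by have := i.isLt; have := n.isLt; omega⟩
              ⟨(k : ℕ) + j, by have := j.isLt; have := n.isLt; omega⟩) := by
        ext i j
        show Mx _ _ = _
        rw [hMxe, if_neg (by
          intro h
          have := congrArg Fin.val h
          simp [e] at this
          omega)]
        have h1 : (e (Fin.succAbove 0 i)).1 =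
            (⟨(k : ℕ) + i + 1, by have := i.isLt; have := n.isLt; omega⟩ : Fin m) := by
          apply Fin.ext; simp [e]; omega
        have h2 : (e (Fin.succAbove (Fin.last ((n : ℕ) - (k : ℕ))) j)).1 =
            (⟨(k : ℕ) + j, by have := j.isLt; have := n.isLt; omega⟩ : Fin m) := by
          apply Fin.ext; simp [e]
        rw [h1, h2]
        rfl
      rw [hcol, hsub]
      simp
    · intro i _ hi
      have hcol : ((Mx.toSquareBlock b 1).submatrix e e) i (Fin.last ((n : ℕ) - (k : ℕ))) = 0 := by
        show Mx _ _ = 0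
        rw [hMxe, if_pos (by apply Fin.ext; simp [e]; omega), if_neg]
        intro h
        apply hi
        have : (k : ℕ) + (i : ℕ) = (k : ℕ) := by
          have := congrArg Fin.val h; simpa [e] using this
        apply Fin.ext; simp only [Fin.val_zero]; omega
      rw [hcol]; ring
  have hdetA : A.det = ∏ i, A i i :=
    Matrix.det_of_lowerTriangular A (fun i j hij => hLT i j hij)
  have hfib : (∏ a : Fin 3, ∏ i : {x : Fin m // b x = a}, A i.1 i.1) = ∏ i, A i i :=
    Fintype.prod_fiberwise b (fun i => A i i)
  have hIcc : (∏ i : {x : Fin m // b x = 1}, A i.1 i.1) = ∏ i ∈ Finset.Icc k n, A i i := by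
    refine (Finset.prod_subtype (Finset.Icc k n) ?_ (fun i => A i i)).symm
    intro x
    rw [Finset.mem_Icc, hb1]
    exact Iff.rfl
  have key : A.det * B n k = (∏ i : {x : Fin m // b x = 0}, A i.1 i.1) *
      ((-1 : F) ^ ((n : ℕ) - (k : ℕ)) *
        Matrix.det (Matrix.of fun i j : Fin ((n : ℕ) - (k : ℕ)) =>
          A ⟨(k : ℕ) + i + 1, by have := i.isLt; have := n.isLt; omega⟩
            ⟨(k : ℕ) + j, by have := j.isLt; have := n.isLt; omega⟩)) *
      (∏ i : {x : Fin m // b x = 2}, A i.1 i.1) := by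
    rw [← hMdet, hdet3, Fin.prod_univ_three, hP0, hP1, hP2]
  have hAdet2 : A.det = (∏ i : {x : Fin m // b x = 0}, A i.1 i.1) *
      (∏ i ∈ Finset.Icc k n, A i i) * (∏ i : {x : Fin m // b x = 2}, A i.1 i.1) := by
    rw [hdetA, ← hfib, Fin.prod_univ_three, hIcc]
  have h0ne : (∏ i : {x : Fin m // b x = 0}, A i.1 i.1) ≠ 0 :=
    Finset.prod_ne_zero_iff.mpr (fun i _ => hdiag i.1)
  have h2ne : (∏ i : {x : Fin m // b x = 2}, A i.1 i.1) ≠ 0 :=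
    Finset.prod_ne_zero_iff.mpr (fun i _ => hdiag i.1)
  have hIccne : (∏ i ∈ Finset.Icc k n, A i i) ≠ 0 :=
    Finset.prod_ne_zero_iff.mpr (fun i _ => hdiag i)
  rw [hAdet2] at key
  have hmain : (∏ i ∈ Finset.Icc k n, A i i) * B n k =
      (-1 : F) ^ ((n : ℕ) - (k : ℕ)) *
        Matrix.det (Matrix.of fun i j : Fin ((n : ℕ) - (k : ℕ)) =>
          A ⟨(k : ℕ) + i + 1, by have := i.isLt; have := n.isLt; omega⟩
            ⟨(k : ℕ) + j, by have := j.isLt; have := n.isLt; omega⟩) := by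
    apply mul_left_cancel₀ h0ne
    apply mul_right_cancel₀ h2ne
    linear_combination key
  rw [div_mul_eq_mul_div, eq_div_iff hIccne]
  linear_combination hmain
end

section
/- Define P_{m,k}(q) by the determinant P_{m,k} = \det( h_{m-k-i+2j-1}(\{1,q\}^{i-j+2}) )_{i,j \in \{0,\dots,k-1\}}, with P_{m,0} = 1. Then for each n, the matrix ((-1)^{k-m} \frac{[m]!}{[k+1]!} P_{k,k-m})_{k,m \in \{0,\dots,n\}} is the inverse of the matrix (h_{2m-k}(\{1,q\}^{k-m+1}))_{k,m \in \{0,\dots,n\}} over \mathbb{Q}(q). -/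
open Finset

/-- The `q`-factorial `[m]! = ∏_{i=1}^m [i]`. -/
noncomputable def qfact (m : ℕ) : RatFunc ℚ := ∏ i ∈ Icc 1 m, qint i

/-- `h_j({1,q}^r)`: the complete homogeneous symmetric polynomial of degree `j` in `2r`
variables, `r` specialized to `q` and `r` to `1`; it vanishes for `j < 0`, or for `r ≤ 0`
with `j > 0`, and `h_0 = 1`. -/
noncomputable def hgen (j r : ℤ) : RatFunc ℚ :=
  if 0 ≤ j ∧ 0 < r then
    ∑ i ∈ range (j.toNat + 1),
      (((r - 1).toNat + i).choose (r - 1).toNat : RatFunc ℚ) *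
        ((j.toNat + (r - 1).toNat - i).choose (r - 1).toNat : RatFunc ℚ) * RatFunc.X ^ i
  else if j = 0 then 1 else 0

/-- The `q`-Faulhaber polynomial
`P_{m,k} = det( h_{m-k-i+2j-1}({1,q}^{i-j+2}) )_{i,j ∈ {0,…,k-1}}`. -/
noncomputable def P (m k : ℕ) : RatFunc ℚ :=
  Matrix.det (Matrix.of fun i j : Fin k =>
    hgen ((m : ℤ) - k - i + 2 * j - 1) ((i : ℤ) - j + 2))

lemma X_pow_ne_one {t : ℕ} (ht : t ≠ 0) : (RatFunc.X : RatFunc ℚ) ^ t ≠ 1 := by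
  have h2 : (RatFunc.X : RatFunc ℚ) ^ t = algebraMap (Polynomial ℚ) _ (Polynomial.X ^ t) := by
    rw [map_pow, RatFunc.algebraMap_X]
  rw [h2]
  intro h
  rw [show (1 : RatFunc ℚ) = algebraMap (Polynomial ℚ) _ 1 from (map_one _).symm] at h
  have h1 : (Polynomial.X ^ t : Polynomial ℚ) = 1 := RatFunc.algebraMap_injective ℚ h
  have := congrArg Polynomial.natDegree h1
  simp [Polynomial.natDegree_X_pow] at this
  exact ht this

lemma X_ne_one : (RatFunc.X : RatFunc ℚ) ≠ 1 := by
  have := X_pow_ne_one (t := 1) one_ne_zero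
  simpa using this

lemma qint_ne_zero {t : ℕ} (ht : t ≠ 0) : qint t ≠ 0 := by
  unfold qint
  apply div_ne_zero <;> rw [sub_ne_zero]
  · exact fun h => X_pow_ne_one ht h.symm
  · exact fun h => X_ne_one h.symm

lemma qfact_ne_zero (m : ℕ) : qfact m ≠ 0 := by
  unfold qfact
  exact prod_ne_zero_iff.mpr fun i hi => qint_ne_zero (by simp at hi; omega)

lemma qfact_add (a b : ℕ) : qfact (a + b) = qfact a * ∏ i ∈ range b, qint (a + 1 + i) := by
  induction b with
  | zero => simp
  | succ b ih =>
      rw [← add_assoc, show a + b + 1 = (a+b) + 1 from rfl, qfact,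
        Finset.prod_Icc_succ_top (by omega : 1 ≤ a + b + 1), ← qfact,
        ih, prod_range_succ, mul_assoc, show a + b + 1 = a + 1 + b from by omega]

lemma qfact_succ (m : ℕ) : qfact (m + 1) = qfact m * qint (m + 1) := by
  rw [qfact, Finset.prod_Icc_succ_top (by omega : 1 ≤ m + 1), ← qfact]

lemma hgen_zero_of_nonpos {d r : ℤ} (hr : r ≤ 0) (hd : d ≠ 0) : hgen d r = 0 := by
  rw [hgen, if_neg (by omega), if_neg hd]

lemma hgen_one {d : ℤ} (hd : 0 ≤ d) : hgen d 1 = qint (d.toNat + 1) := by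
  rw [hgen, if_pos ⟨hd, one_pos⟩]
  simp only [sub_self, Int.toNat_zero, Nat.choose_zero_right, Nat.cast_one, one_mul,
    Nat.add_zero, zero_add]
  rw [geom_sum_eq (fun h => X_pow_ne_one (t := 1) one_ne_zero (by rwa [pow_one]))]
  rw [qint, ← neg_div_neg_eq, neg_sub, neg_sub]

noncomputable def Cm (m k : ℕ) : Matrix (Fin (k - m + 1)) (Fin (k - m + 1)) (RatFunc ℚ) :=
  Matrix.of fun i j =>
    if (i : ℕ) = 0 then hgen (2 * ((m : ℤ) + (j : ℕ)) - k) ((k : ℤ) - ((m : ℤ) + (j : ℕ)) + 1)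
    else hgen ((m : ℤ) + 2 * (j : ℕ) - (i : ℕ)) (((i : ℕ) : ℤ) - (j : ℕ) + 1)

lemma detCm_self (m : ℕ) : (Cm m m).det = qint (m + 1) := by
  have h1 : (1:ℕ) = m - m + 1 := by omega
  rw [← Matrix.det_submatrix_equiv_self (finCongr h1) (Cm m m), Matrix.det_fin_one]
  simp only [Matrix.submatrix_apply, Cm, Matrix.of_apply, finCongr_apply, Fin.coe_cast,
    Fin.val_zero, if_pos rfl]
  norm_num
  rw [show 2 * (m:ℤ) - m = (m:ℤ) from by ring, hgen_one (by positivity)]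
  norm_num

lemma detCm_lt (m k : ℕ) (h : m < k) : (Cm m k).det = 0 := by
  apply Matrix.det_zero_of_row_eq (i := ⟨k - m, by omega⟩) (j := 0)
  · intro hc
    rw [Fin.ext_iff] at hc
    simp at hc
    omega
  · funext c
    simp only [Cm, Matrix.of_apply]
    rw [if_neg (show ¬ k - m = 0 by omega), if_pos (by simp)]
    congr 1 <;> push_cast <;> omega

lemma detM (m k : ℕ) (j : Fin (k - m + 1)) :
    ((Cm m k).submatrix Fin.succ j.succAbove).det
      = P (m + (j:ℕ)) (j:ℕ) * ∏ i ∈ range (k - m - (j:ℕ)), qint (m + (j:ℕ) + 2 + i) := by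
  obtain ⟨jn, hjlt⟩ := j
  set K := k - m with hK
  simp only [show ((⟨jn, hjlt⟩ : Fin (K+1)) : ℕ) = jn from rfl]
  set j : Fin (K + 1) := ⟨jn, hjlt⟩ with hjdef
  have hj : jn ≤ K := by omega
  let e : Fin jn ⊕ Fin (K - jn) ≃ Fin K := finSumFinEquiv.trans (finCongr (by omega))
  rw [← Matrix.det_submatrix_equiv_self e]
  have hvl : ∀ a : Fin jn, ((e (Sum.inl a)) : ℕ) = a := by
    intro a; simp [e]
  have hvr : ∀ b : Fin (K - jn), ((e (Sum.inr b)) : ℕ) = jn + b := by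
    intro b; simp [e]
  have hcol : ∀ y : Fin K, ((j.succAbove y) : ℕ) = if (y:ℕ) < jn then (y:ℕ) else (y:ℕ) + 1 := by
    intro y
    by_cases hy : (y:ℕ) < jn
    · rw [if_pos hy, Fin.succAbove_of_castSucc_lt]
      · simp
      · rw [Fin.lt_iff_val_lt_val]; simpa using hy
    · rw [if_neg hy, Fin.succAbove_of_le_castSucc]
      · simp
      · rw [Fin.le_iff_val_le_val]; simp; have : ((⟨jn, hjlt⟩ : Fin (K+1)) : ℕ) = jn := rfl; omega
  have hCm : ∀ (x : Fin K) (y : Fin K),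
      (Cm m k) (Fin.succ x) (j.succAbove y)
        = hgen ((m:ℤ) + 2 * ((j.succAbove y : Fin (K+1)) : ℕ) - ((x:ℕ) + 1))
            (((x:ℕ) + 1 : ℤ) - ((j.succAbove y : Fin (K+1)) : ℕ) + 1) := by
    intro x y
    simp only [Cm, Matrix.of_apply]
    rw [if_neg (by simp)]
    congr 1 <;> push_cast <;> ring
  have hblock : ((Cm m k).submatrix Fin.succ j.succAbove).submatrix e e
      = Matrix.fromBlocks
          (Matrix.of fun i c : Fin jn => hgen ((m:ℤ) - 1 - i + 2*c) ((i:ℤ) - c + 2))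
          0
          (Matrix.of fun (i : Fin (K - jn)) (c : Fin jn) =>
            hgen ((m:ℤ) - 1 - jn - i + 2*c) ((jn:ℤ) + i - c + 2))
          (Matrix.of fun i c : Fin (K - jn) => hgen ((m:ℤ) + jn + 1 + 2*c - i) ((i:ℤ) - c + 1)) := by
    ext i c
    cases i with
    | inl i =>
      cases c with
      | inl c =>
        simp only [Matrix.submatrix_apply, Matrix.fromBlocks_apply₁₁, Matrix.of_apply]
        rw [hCm, hcol, hvl, hvl, if_pos (by omega)]
        congr 1 <;> push_cast <;> ring
      | inr c =>
        simp only [Matrix.submatrix_apply, Matrix.fromBlocks_apply₁₂, Matrix.zero_apply]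
        rw [hCm, hcol, hvl, hvr, if_neg (by omega)]
        apply hgen_zero_of_nonpos
        · have := i.isLt; push_cast; omega
        · have := i.isLt; push_cast; omega
    | inr i =>
      cases c with
      | inl c =>
        simp only [Matrix.submatrix_apply, Matrix.fromBlocks_apply₂₁, Matrix.of_apply]
        rw [hCm, hcol, hvr, hvl, if_pos (by omega)]
        congr 1 <;> push_cast <;> ring
      | inr c =>
        simp only [Matrix.submatrix_apply, Matrix.fromBlocks_apply₂₂, Matrix.of_apply]
        rw [hCm, hcol, hvr, hvr, if_neg (by omega)]
        congr 1 <;> push_cast <;> ring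
  rw [hblock, Matrix.det_fromBlocks_zero₁₂]
  congr 1
  · rw [P]
    congr 1
    ext i c
    simp only [Matrix.of_apply]
    congr 1 <;> push_cast <;> ring
  · rw [Matrix.det_of_lowerTriangular]
    · rw [← Fin.prod_univ_eq_prod_range]
      apply Finset.prod_congr rfl
      intro i _
      simp only [Matrix.of_apply]
      rw [show (m:ℤ) + jn + 1 + 2*(i:ℕ) - (i:ℕ) = ((m + jn + 1 + (i:ℕ) : ℕ) : ℤ) from by push_cast; ring]
      simp only [sub_self, zero_add]
      rw [hgen_one (Int.natCast_nonneg _), Int.toNat_natCast]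
      congr 1
      omega
    · intro a b hab
      simp only [Matrix.of_apply]
      rw [OrderDual.toDual_lt_toDual, Fin.lt_iff_val_lt_val] at hab
      apply hgen_zero_of_nonpos <;> push_cast <;> omega

lemma Cm_zero (m k : ℕ) (j : Fin (k - m + 1)) :
    Cm m k 0 j = hgen (2 * ((m : ℤ) + (j:ℕ)) - k) ((k : ℤ) - ((m : ℤ) + (j:ℕ)) + 1) := by
  simp only [Cm, Matrix.of_apply]
  rw [if_pos (Fin.val_zero _)]

lemma key_s7 (m k : ℕ) (hmk : m ≤ k) :
    ∑ j ∈ range (k - m + 1),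
      hgen (2 * ((m:ℤ) + j) - k) ((k:ℤ) - ((m:ℤ) + j) + 1) *
        ((-1:RatFunc ℚ)^j * (qfact m / qfact (m + j + 1)) * P (m + j) j)
    = if k = m then 1 else 0 := by
  have hterm : ∀ j : Fin (k - m + 1),
      hgen (2 * ((m:ℤ) + (j:ℕ)) - k) ((k:ℤ) - ((m:ℤ) + (j:ℕ)) + 1) *
        ((-1:RatFunc ℚ)^(j:ℕ) * (qfact m / qfact (m + (j:ℕ) + 1)) * P (m + (j:ℕ)) (j:ℕ))
      = (qfact m / qfact (k+1)) *
        ((-1:RatFunc ℚ)^(j:ℕ) * Cm m k 0 j * ((Cm m k).submatrix Fin.succ j.succAbove).det) := by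
    intro j
    rw [detM, Cm_zero]
    have hjle : (j:ℕ) ≤ k - m := by omega
    have hq : qfact (k + 1)
        = qfact (m + (j:ℕ) + 1) * ∏ i ∈ range (k - m - (j:ℕ)), qint (m + (j:ℕ) + 2 + i) := by
      have h := qfact_add (m + (j:ℕ) + 1) (k - m - (j:ℕ))
      rw [show m + (j:ℕ) + 1 + (k - m - (j:ℕ)) = k + 1 from by omega] at h
      rw [h]
    rw [hq]
    have h1 : qfact (m + (j:ℕ) + 1) ≠ 0 := qfact_ne_zero _
    have h2 : (∏ i ∈ range (k - m - (j:ℕ)), qint (m + (j:ℕ) + 2 + i)) ≠ 0 :=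
      prod_ne_zero_iff.mpr fun i _ => qint_ne_zero (by omega)
    field_simp
  have hmain : ∑ j ∈ range (k - m + 1),
      hgen (2 * ((m:ℤ) + j) - k) ((k:ℤ) - ((m:ℤ) + j) + 1) *
        ((-1:RatFunc ℚ)^j * (qfact m / qfact (m + j + 1)) * P (m + j) j)
      = (qfact m / qfact (k+1)) * (Cm m k).det := by
    rw [Matrix.det_succ_row_zero, Finset.mul_sum,
      ← Fin.sum_univ_eq_sum_range (fun j => hgen (2 * ((m:ℤ) + j) - k) ((k:ℤ) - ((m:ℤ) + j) + 1) *
        ((-1:RatFunc ℚ)^j * (qfact m / qfact (m + j + 1)) * P (m + j) j)) (k - m + 1)]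
    exact Finset.sum_congr rfl fun j _ => hterm j
  rw [hmain]
  rcases Nat.eq_or_lt_of_le hmk with heq | hlt
  · subst heq
    rw [if_pos rfl, detCm_self, qfact_succ]
    have h1 : qfact m ≠ 0 := qfact_ne_zero _
    have h2 : qint (m + 1) ≠ 0 := qint_ne_zero (by omega)
    field_simp
  · rw [if_neg (by omega), detCm_lt m k hlt, mul_zero]

theorem stmt7 (n : ℕ) :
    let A : Matrix (Fin (n + 1)) (Fin (n + 1)) (RatFunc ℚ) :=
      Matrix.of fun k m => hgen (2 * (m : ℤ) - (k : ℤ)) ((k : ℤ) - (m : ℤ) + 1)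
    let B : Matrix (Fin (n + 1)) (Fin (n + 1)) (RatFunc ℚ) :=
      Matrix.of fun k m =>
        if (m : ℕ) ≤ (k : ℕ) then
          (-1 : RatFunc ℚ) ^ ((k : ℕ) - (m : ℕ)) * (qfact m / qfact (k + 1)) *
            P k ((k : ℕ) - (m : ℕ))
        else 0
    A * B = 1 ∧ B * A = 1 := by
  intro A B
  have hAB : A * B = 1 := by
    show (Matrix.of fun k m : Fin (n+1) => hgen (2 * (m : ℤ) - (k : ℤ)) ((k : ℤ) - (m : ℤ) + 1)) *
      (Matrix.of fun k m : Fin (n+1) =>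
        if (m : ℕ) ≤ (k : ℕ) then
          (-1 : RatFunc ℚ) ^ ((k : ℕ) - (m : ℕ)) * (qfact m / qfact (k + 1)) *
            P k ((k : ℕ) - (m : ℕ))
        else 0) = 1
    ext k m'
    rw [Matrix.mul_apply, Matrix.one_apply]
    have h1 : ∑ l : Fin (n+1),
        (Matrix.of fun k m : Fin (n+1) => hgen (2 * (m : ℤ) - (k : ℤ)) ((k : ℤ) - (m : ℤ) + 1)) k l *
        (Matrix.of fun k m : Fin (n+1) =>
          if (m : ℕ) ≤ (k : ℕ) then
            (-1 : RatFunc ℚ) ^ ((k : ℕ) - (m : ℕ)) * (qfact m / qfact (k + 1)) *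
              P k ((k : ℕ) - (m : ℕ))
          else 0) l m'
        = ∑ t ∈ range (n+1),
          (fun t : ℕ => hgen (2 * (t : ℤ) - (k : ℕ)) (((k:ℕ) : ℤ) - (t : ℤ) + 1) *
            (if (m' : ℕ) ≤ t then
              (-1 : RatFunc ℚ) ^ (t - (m' : ℕ)) * (qfact m' / qfact (t + 1)) *
                P t (t - (m' : ℕ))
            else 0)) t := by
      rw [← Fin.sum_univ_eq_sum_range]
      rfl
    rw [h1]
    by_cases hm : (m' : ℕ) ≤ (k : ℕ)
    · have h2 : ∑ t ∈ range (n+1),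
          (fun t : ℕ => hgen (2 * (t : ℤ) - (k : ℕ)) (((k:ℕ) : ℤ) - (t : ℤ) + 1) *
            (if (m' : ℕ) ≤ t then
              (-1 : RatFunc ℚ) ^ (t - (m' : ℕ)) * (qfact m' / qfact (t + 1)) *
                P t (t - (m' : ℕ))
            else 0)) t
          = ∑ t ∈ Icc (m' : ℕ) (k : ℕ),
            (fun t : ℕ => hgen (2 * (t : ℤ) - (k : ℕ)) (((k:ℕ) : ℤ) - (t : ℤ) + 1) *
              (if (m' : ℕ) ≤ t then
                (-1 : RatFunc ℚ) ^ (t - (m' : ℕ)) * (qfact m' / qfact (t + 1)) *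
                  P t (t - (m' : ℕ))
              else 0)) t := by
        refine (Finset.sum_subset ?_ ?_).symm
        · intro x hx
          simp only [mem_Icc, mem_range] at *
          have := k.isLt
          omega
        · intro x hx hnx
          simp only [mem_Icc, not_and_or, not_le] at hnx
          rcases hnx with h | h
          · rw [if_neg (by omega), mul_zero]
          · rw [hgen_zero_of_nonpos (by push_cast; omega) (by push_cast; omega), zero_mul]
      rw [h2, ← Finset.Ico_add_one_right_eq_Icc, Finset.sum_Ico_eq_sum_range,
        show (k : ℕ) + 1 - (m' : ℕ) = (k : ℕ) - (m' : ℕ) + 1 from by omega]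
      have h3 : ∀ j ∈ range ((k:ℕ) - (m':ℕ) + 1),
          (fun t : ℕ => hgen (2 * (t : ℤ) - (k : ℕ)) (((k:ℕ) : ℤ) - (t : ℤ) + 1) *
            (if (m' : ℕ) ≤ t then
              (-1 : RatFunc ℚ) ^ (t - (m' : ℕ)) * (qfact m' / qfact (t + 1)) *
                P t (t - (m' : ℕ))
            else 0)) ((m' : ℕ) + j)
          = hgen (2 * (((m':ℕ):ℤ) + j) - (k:ℕ)) (((k:ℕ):ℤ) - (((m':ℕ):ℤ) + j) + 1) *
              ((-1:RatFunc ℚ)^j * (qfact m' / qfact ((m':ℕ) + j + 1)) * P ((m':ℕ) + j) j) := by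
        intro j _
        simp only
        rw [if_pos (by omega), show (m' : ℕ) + j - (m' : ℕ) = j from by omega]
        congr 2 <;> push_cast <;> ring
      rw [Finset.sum_congr rfl h3, key_s7 (m' : ℕ) (k : ℕ) hm]
      congr 1
      · simp [Fin.ext_iff, eq_comm]
    · rw [if_neg (by intro h; rw [h] at hm; omega)]
      apply Finset.sum_eq_zero
      intro t ht
      by_cases h : (m' : ℕ) ≤ t
      · rw [hgen_zero_of_nonpos (by push_cast; omega) (by push_cast; omega), zero_mul]
      · rw [if_neg h, mul_zero]
  exact ⟨hAB, mul_eq_one_comm.mp hAB⟩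
end
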